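/- Let G be a finite abelian group with |G| = m and let A ⊆ G. Then for any positive integer k, the sum over all g ∈ G of (R_A(g) − k)² is at least km − (2k − 1)|A| + k² − k. -/

import Mathlib

/-- `repFn A g` is the number of ordered pairs `(a, a') ∈ A × A` with `a + a' = g`. -/
def repFn {G : Type*} [AddCommGroup G] [DecidableEq G] (A : Finset G) (g : G) : ℕ :=
  ((A ×ˢ A).filter fun p => p.1 + p.2 = g).card

/-- `diffFn A t` is the number of ordered pairs `(a, a') ∈ A × A` with `a - a' = t`. -/
def diffFn {G : Type*} [AddCommGroup G] [DecidableEq G] (A : Finset G) (t : G) : ℕ :=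
  ((A ×ˢ A).filter fun p => p.1 - p.2 = t).card

section aux
variable {G : Type*} [AddCommGroup G] [Fintype G] [DecidableEq G]

lemma sum_repFn_aux (A : Finset G) : ∑ g : G, repFn A g = A.card ^ 2 := by
  rw [sq, ← Finset.card_product]
  exact (Finset.card_eq_sum_card_fiberwise (f := fun p : G × G => p.1 + p.2)
    (fun x _ => Finset.mem_univ _)).symm

lemma sum_diffFn_aux (A : Finset G) : ∑ t : G, diffFn A t = A.card ^ 2 := by
  rw [sq, ← Finset.card_product]
  exact (Finset.card_eq_sum_card_fiberwise (f := fun p : G × G => p.1 - p.2)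
    (fun x _ => Finset.mem_univ _)).symm

omit [Fintype G] in
lemma diffFn_zero_aux (A : Finset G) : diffFn A 0 = A.card := by
  unfold diffFn
  refine Finset.card_bij' (fun p _ => p.1) (fun a _ => (a, a)) ?_ ?_ ?_ ?_
  · intro p hp
    simp only [Finset.mem_filter, Finset.mem_product] at hp
    exact hp.1.1
  · intro a ha
    simp only [Finset.mem_filter, Finset.mem_product, sub_self, and_true]
    exact ⟨ha, ha⟩
  · intro p hp
    simp only [Finset.mem_filter, Finset.mem_product, sub_eq_zero] at hp
    exact Prod.ext rfl hp.2
  · intro a ha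
    rfl

lemma sum_sq_repFn_aux (A : Finset G) :
    ∑ g : G, (repFn A g) ^ 2 = ∑ t : G, (diffFn A t) ^ 2 := by
  set Q1 := ((A ×ˢ A) ×ˢ (A ×ˢ A)).filter
    (fun q : (G × G) × (G × G) => q.1.1 + q.1.2 = q.2.1 + q.2.2) with hQ1
  set Q2 := ((A ×ˢ A) ×ˢ (A ×ˢ A)).filter
    (fun q : (G × G) × (G × G) => q.1.1 - q.1.2 = q.2.1 - q.2.2) with hQ2
  have e1 : ∑ g : G, (repFn A g) ^ 2 = Q1.card := by
    rw [Finset.card_eq_sum_card_fiberwise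
      (f := fun q : (G × G) × (G × G) => q.1.1 + q.1.2) (t := Finset.univ)
      (fun x _ => Finset.mem_univ _)]
    refine Finset.sum_congr rfl fun g _ => ?_
    rw [sq, repFn, ← Finset.card_product]
    congr 1
    ext q
    simp only [hQ1, Finset.mem_filter, Finset.mem_product]
    aesop
  have e2 : ∑ t : G, (diffFn A t) ^ 2 = Q2.card := by
    rw [Finset.card_eq_sum_card_fiberwise
      (f := fun q : (G × G) × (G × G) => q.1.1 - q.1.2) (t := Finset.univ)
      (fun x _ => Finset.mem_univ _)]
    refine Finset.sum_congr rfl fun g _ => ?_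
    rw [sq, diffFn, ← Finset.card_product]
    congr 1
    ext q
    simp only [hQ2, Finset.mem_filter, Finset.mem_product]
    aesop
  have e3 : Q1.card = Q2.card := by
    refine Finset.card_bij' (fun q _ => ((q.1.1, q.2.2), (q.2.1, q.1.2)))
      (fun q _ => ((q.1.1, q.2.2), (q.2.1, q.1.2))) ?_ ?_ ?_ ?_
    · rintro ⟨⟨a, b⟩, c, d⟩ hq
      simp only [hQ1, hQ2, Finset.mem_filter, Finset.mem_product] at hq ⊢
      obtain ⟨⟨⟨ha, hb⟩, hc, hd⟩, heq⟩ := hq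
      exact ⟨⟨⟨ha, hd⟩, hc, hb⟩, sub_eq_sub_iff_add_eq_add.mpr heq⟩
    · rintro ⟨⟨a, b⟩, c, d⟩ hq
      simp only [hQ1, hQ2, Finset.mem_filter, Finset.mem_product] at hq ⊢
      obtain ⟨⟨⟨ha, hb⟩, hc, hd⟩, heq⟩ := hq
      exact ⟨⟨⟨ha, hd⟩, hc, hb⟩, sub_eq_sub_iff_add_eq_add.mp heq⟩
    · rintro ⟨⟨a, b⟩, c, d⟩ _
      rfl
    · rintro ⟨⟨a, b⟩, c, d⟩ _
      rfl
  rw [e1, e2, e3]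

end aux

theorem stmt_9 {G : Type*} [AddCommGroup G] [Fintype G] [DecidableEq G]
    (m : ℕ) (hm : Fintype.card G = m) (A : Finset G) (k : ℕ) (hk : 0 < k) :
    (∑ g : G, ((repFn A g : ℤ) - k) ^ 2) ≥
      k * m - (2 * k - 1) * A.card + k ^ 2 - k := by
  subst hm
  set m : ℕ := Fintype.card G with hmdef
  have hm1 : 1 ≤ m := Fintype.card_pos
  set n : ℕ := A.card with hndef
  -- cast basic identities to ℤ
  have hrep : ∑ g : G, (repFn A g : ℤ) = (n : ℤ) ^ 2 := by
    exact_mod_cast congrArg (Nat.cast : ℕ → ℤ) (sum_repFn_aux A)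
  have hdiff : ∑ t : G, (diffFn A t : ℤ) = (n : ℤ) ^ 2 := by
    exact_mod_cast congrArg (Nat.cast : ℕ → ℤ) (sum_diffFn_aux A)
  have hE : ∑ g : G, (repFn A g : ℤ) ^ 2 = ∑ t : G, (diffFn A t : ℤ) ^ 2 := by
    exact_mod_cast congrArg (Nat.cast : ℕ → ℤ) (sum_sq_repFn_aux A)
  have hd0 : (diffFn A 0 : ℤ) = (n : ℤ) := by exact_mod_cast diffFn_zero_aux A
  -- expand the square
  have expand : ∑ g : G, ((repFn A g : ℤ) - k) ^ 2
      = (∑ g : G, (repFn A g : ℤ) ^ 2) - 2 * k * (∑ g : G, (repFn A g : ℤ))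
        + (k : ℤ) ^ 2 * m := by
    have h : ∀ g : G, ((repFn A g : ℤ) - k) ^ 2
        = (repFn A g : ℤ) ^ 2 - 2 * k * (repFn A g : ℤ) + (k : ℤ) ^ 2 := fun g => by ring
    rw [Finset.sum_congr rfl fun g _ => h g]
    rw [Finset.sum_add_distrib, Finset.sum_sub_distrib, ← Finset.mul_sum,
      Finset.sum_const, Finset.card_univ, nsmul_eq_mul]
    ring
  -- split off t = 0 from the difference sum
  have hsplit_sq : ∑ t : G, (diffFn A t : ℤ) ^ 2
      = (n : ℤ) ^ 2 + ∑ t ∈ Finset.univ.erase 0, (diffFn A t : ℤ) ^ 2 := by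
    rw [← Finset.add_sum_erase Finset.univ _ (Finset.mem_univ (0 : G)), hd0]
  have hsplit : ∑ t ∈ Finset.univ.erase 0, (diffFn A t : ℤ) = (n : ℤ) ^ 2 - n := by
    have := Finset.add_sum_erase Finset.univ (fun t => (diffFn A t : ℤ))
      (Finset.mem_univ (0 : G))
    simp only [hdiff, hd0] at this
    linarith
  have hcard_erase : ((Finset.univ.erase (0 : G)).card : ℤ) = (m : ℤ) - 1 := by
    rw [Finset.card_erase_of_mem (Finset.mem_univ _), Finset.card_univ, ← hmdef]
    push_cast [Nat.cast_sub hm1]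
    ring
  -- the pointwise integer inequality
  have key : ∀ t ∈ Finset.univ.erase (0 : G),
      (2 * (k : ℤ) - 1) * (diffFn A t : ℤ) - (k : ℤ) * ((k : ℤ) - 1)
        ≤ (diffFn A t : ℤ) ^ 2 := by
    intro t _
    set d : ℤ := (diffFn A t : ℤ) with hd
    have h : (0 : ℤ) ≤ (d - k) * (d - k + 1) := by
      rcases le_or_gt (k : ℤ) d with h | h
      · have h1 : (0:ℤ) ≤ d - k := by linarith
        nlinarith
      · have h1 : d + 1 ≤ (k : ℤ) := h
        have h2 : d - k + 1 ≤ 0 := by linarith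
        have h3 : d - k ≤ 0 := by linarith
        nlinarith
    nlinarith
  have hbound : ∑ t ∈ Finset.univ.erase 0, (diffFn A t : ℤ) ^ 2
      ≥ (2 * (k : ℤ) - 1) * ((n : ℤ) ^ 2 - n) - ((m : ℤ) - 1) * ((k : ℤ) * ((k : ℤ) - 1)) := by
    calc ∑ t ∈ Finset.univ.erase 0, (diffFn A t : ℤ) ^ 2
        ≥ ∑ t ∈ Finset.univ.erase 0,
            ((2 * (k : ℤ) - 1) * (diffFn A t : ℤ) - (k : ℤ) * ((k : ℤ) - 1)) :=
          Finset.sum_le_sum key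
      _ = (2 * (k : ℤ) - 1) * ((n : ℤ) ^ 2 - n) - ((m : ℤ) - 1) * ((k : ℤ) * ((k : ℤ) - 1)) := by
          rw [Finset.sum_sub_distrib, ← Finset.mul_sum, hsplit, Finset.sum_const,
            nsmul_eq_mul, hcard_erase]
  rw [expand, hE, hsplit_sq, hrep]
  have hkZ : (1 : ℤ) ≤ k := by exact_mod_cast hk
  nlinarith [hbound]
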